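/- The Seidl co-motion functions in one dimension satisfy the group law: f_i equals the i-fold composition of f₁ with itself for i = 1,…,N−1, and the N-fold composition of f₁ equals the identity almost everywhere with respect to ρ. -/

import Mathlib

open MeasureTheory

section SeidlAux

variable {ρ : ℝ → ℝ}

private lemma seidl_H_mono (hρint : Integrable ρ) (hρpos : ∀ r, 0 < ρ r) :
    StrictMono (fun r => ∫ x in Set.Iic r, ρ x) := by
  intro a b hab
  have h := intervalIntegral.integral_Iic_sub_Iic (μ := volume) (f := ρ) (a := a) (b := b)
      hρint.integrableOn hρint.integrableOn
  have hpos : 0 < ∫ x in a..b, ρ x :=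
    intervalIntegral.intervalIntegral_pos_of_pos hρint.intervalIntegrable hρpos hab
  dsimp only
  linarith

private lemma seidl_H_cont (hρint : Integrable ρ) :
    Continuous (fun r => ∫ x in Set.Iic r, ρ x) := by
  have h : ∀ r : ℝ, ∫ x in Set.Iic r, ρ x
      = (∫ x in Set.Iic (0:ℝ), ρ x) + ∫ x in (0:ℝ)..r, ρ x := by
    intro r
    have := intervalIntegral.integral_Iic_sub_Iic (μ := volume) (f := ρ) (a := (0:ℝ)) (b := r)
      hρint.integrableOn hρint.integrableOn
    linarith
  have hcont : Continuous fun r : ℝ =>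
      (∫ x in Set.Iic (0:ℝ), ρ x) + ∫ x in (0:ℝ)..r, ρ x :=
    continuous_const.add
      (intervalIntegral.continuous_primitive (fun a b => hρint.intervalIntegrable) 0)
  exact hcont.congr fun r => (h r).symm

private lemma seidl_H_pos (hρint : Integrable ρ) (hρpos : ∀ r, 0 < ρ r) (r : ℝ) :
    0 < ∫ x in Set.Iic r, ρ x := by
  have h := intervalIntegral.integral_Iic_sub_Iic (μ := volume) (f := ρ) (a := r - 1) (b := r)
      hρint.integrableOn hρint.integrableOn
  have hpos : 0 < ∫ x in (r-1)..r, ρ x :=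
    intervalIntegral.intervalIntegral_pos_of_pos hρint.intervalIntegrable hρpos (by linarith)
  have hnn : 0 ≤ ∫ x in Set.Iic (r - 1), ρ x :=
    setIntegral_nonneg measurableSet_Iic fun x _ => (hρpos x).le
  linarith

private lemma seidl_H_lt (hρint : Integrable ρ) (hρpos : ∀ r, 0 < ρ r) (r : ℝ) :
    (∫ x in Set.Iic r, ρ x) < ∫ x, ρ x := by
  have h := intervalIntegral.integral_Iic_add_Ioi (μ := volume) (f := ρ) (b := r)
      hρint.integrableOn hρint.integrableOn
  have hpos : 0 < ∫ x in (r)..(r+1), ρ x :=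
    intervalIntegral.intervalIntegral_pos_of_pos hρint.intervalIntegrable hρpos (by linarith)
  rw [intervalIntegral.integral_of_le (by linarith : r ≤ r + 1)] at hpos
  have hmono : (∫ x in Set.Ioc r (r+1), ρ x) ≤ ∫ x in Set.Ioi r, ρ x := by
    apply setIntegral_mono_set hρint.integrableOn
    · exact Filter.Eventually.of_forall fun x => (hρpos x).le
    · exact HasSubset.Subset.eventuallyLE Set.Ioc_subset_Ioi_self
  linarith

private lemma seidl_H_large (hρint : Integrable ρ) {c : ℝ} (hc : c < ∫ x, ρ x) :
    ∃ b : ℝ, c < ∫ x in Set.Iic b, ρ x := by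
  have hU : ⋃ n : ℕ, Set.Iic ((n : ℝ)) = Set.univ := by
    apply Set.iUnion_eq_univ_iff.2
    intro x
    obtain ⟨n, hn⟩ := exists_nat_ge x
    exact ⟨n, hn⟩
  have h := tendsto_setIntegral_of_monotone (μ := volume) (f := ρ)
      (s := fun n : ℕ => Set.Iic ((n : ℝ))) (fun _ => measurableSet_Iic)
      (fun m n hmn => Set.Iic_subset_Iic.2 (by exact_mod_cast hmn))
      (by rw [hU]; exact hρint.integrableOn)
  rw [hU] at h
  simp only [Measure.restrict_univ] at h
  obtain ⟨n, hn⟩ := (h.eventually (eventually_gt_nhds hc)).exists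
  exact ⟨n, hn⟩

private lemma seidl_H_small (hρint : Integrable ρ) (hρpos : ∀ r, 0 < ρ r) {c : ℝ}
    (hc : 0 < c) : ∃ a : ℝ, (∫ x in Set.Iic a, ρ x) < c := by
  have hI : ⋂ n : ℕ, Set.Iic (-(n : ℝ)) = ∅ := by
    apply Set.eq_empty_iff_forall_notMem.2
    intro x hx
    obtain ⟨n, hn⟩ := exists_nat_gt (-x)
    have := Set.mem_iInter.1 hx n
    simp only [Set.mem_Iic] at this
    linarith
  have h := tendsto_setIntegral_of_antitone (μ := volume) (f := ρ)
      (s := fun n : ℕ => Set.Iic (-(n : ℝ))) (fun _ => measurableSet_Iic)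
      (fun m n hmn => Set.Iic_subset_Iic.2 (by simp; exact_mod_cast hmn))
      ⟨0, hρint.integrableOn⟩
  rw [hI] at h
  simp only [Measure.restrict_empty, integral_zero_measure] at h
  obtain ⟨n, hn⟩ := (h.eventually (eventually_lt_nhds hc)).exists
  exact ⟨-(n : ℝ), hn⟩

end SeidlAux

theorem seidl_group_law (N : ℕ) (hN : 1 ≤ N)
    (ρ : ℝ → ℝ) (hρc : Continuous ρ) (hρpos : ∀ r, 0 < ρ r)
    (hρint : Integrable ρ) (hρN : ∫ r, ρ r = N) :
    let G : ℝ → ℝ := fun r => (∫ x in Set.Iic r, ρ x) / N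
    let Ginv : ℝ → ℝ := fun y => sInf {s : ℝ | y < G s}
    let f : ℕ → ℝ → ℝ := fun i r =>
      if G r ≤ ((N : ℝ) - i) / N then Ginv (G r + i / N) else Ginv (G r + i / N - 1)
    let μ : Measure ℝ := volume.withDensity fun r => ENNReal.ofReal (ρ r)
    (∀ i : ℕ, 1 ≤ i → i ≤ N - 1 → ∀ᵐ r ∂μ, f i r = (f 1)^[i] r) ∧
    (∀ᵐ r ∂μ, (f 1)^[N] r = r) := by
  intro G Ginv f μ
  have hN0 : (0:ℝ) < N := by exact_mod_cast hN
  have hGdef : ∀ r, G r = (∫ x in Set.Iic r, ρ x) / N := fun _ => rfl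
  have hGinvdef : ∀ y, Ginv y = sInf {s : ℝ | y < G s} := fun _ => rfl
  have hfdef : ∀ (i : ℕ) (r : ℝ), f i r =
      if G r ≤ ((N : ℝ) - i) / N then Ginv (G r + i / N) else Ginv (G r + i / N - 1) :=
    fun _ _ => rfl
  have hμdef : μ = volume.withDensity fun r => ENNReal.ofReal (ρ r) := rfl
  have hGmono : StrictMono G := by
    intro a b hab
    simp only [hGdef]
    exact div_lt_div_of_pos_right (seidl_H_mono hρint hρpos hab) hN0
  have hGcont : Continuous G := (seidl_H_cont hρint).div_const _
  have hG0 : ∀ r, 0 < G r := fun r => div_pos (seidl_H_pos hρint hρpos r) hN0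
  have hG1 : ∀ r, G r < 1 := by
    intro r
    rw [hGdef, div_lt_one hN0, ← hρN]
    exact seidl_H_lt hρint hρpos r
  have hGinvG : ∀ s, Ginv (G s) = s := by
    intro s
    have hset : {t : ℝ | G s < G t} = Set.Ioi s := by
      ext t
      simp only [Set.mem_setOf_eq, Set.mem_Ioi]
      exact hGmono.lt_iff_lt
    rw [hGinvdef, hset, csInf_Ioi]
  have hsurj : ∀ y : ℝ, 0 < y → y < 1 → ∃ s, G s = y := by
    intro y h0 h1
    obtain ⟨b, hb⟩ := seidl_H_large hρint (c := y * N)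
      (by rw [hρN]; nlinarith)
    obtain ⟨a, ha⟩ := seidl_H_small hρint hρpos (c := y * N) (by positivity)
    have hGa : G a < y := by rw [hGdef, div_lt_iff₀ hN0]; exact ha
    have hGb : y < G b := by rw [hGdef, lt_div_iff₀ hN0]; exact hb
    have hab : a ≤ b := (hGmono.lt_iff_lt.1 (hGa.trans hGb)).le
    obtain ⟨s, _, hs⟩ := intermediate_value_Icc hab hGcont.continuousOn
      ⟨hGa.le, hGb.le⟩
    exact ⟨s, hs⟩
  have hGGinv : ∀ y : ℝ, 0 < y → y < 1 → G (Ginv y) = y := by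
    intro y h0 h1
    obtain ⟨s, rfl⟩ := hsurj y h0 h1
    rw [hGinvG]
  have hgood_of : ∀ r, (∀ k : ℕ, G r ≠ (k : ℝ) / N) → ∀ m : ℤ, G r ≠ (m : ℝ) / N := by
    intro r h m hm
    rcases le_or_gt 0 m with h0 | h0
    · lift m to ℕ using h0
      apply h m
      rw [hm]
      norm_num
    · have hneg : (m : ℝ) / N < 0 :=
        div_neg_of_neg_of_pos (by exact_mod_cast h0) hN0
      have := hG0 r
      rw [hm] at this
      linarith
  -- the basic step: f 1 shifts the G-value by 1/N modulo 1
  have step : ∀ s : ℝ, (∀ m : ℤ, G s ≠ (m : ℝ) / N) →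
      G (f 1 s) = Int.fract (G s + 1 / N) := by
    intro s hs
    have h0 := hG0 s
    have h1 := hG1 s
    have hNN : ((N:ℝ) - 1) / N + 1 / N = 1 := by field_simp; ring
    have hne : G s ≠ ((N:ℝ) - 1) / N := by
      intro hc
      exact hgood_of s (fun k => hs k) ((N : ℤ) - 1) (by rw [hc]; push_cast; ring)
    rw [hfdef]
    simp only [Nat.cast_one]
    by_cases hc : G s ≤ ((N : ℝ) - 1) / N
    · have hlt : G s < ((N:ℝ) - 1) / N := lt_of_le_of_ne hc hne
      rw [if_pos hc]
      have hb0 : 0 < G s + 1 / N := by positivity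
      have hb1 : G s + 1 / N < 1 := by linarith
      rw [hGGinv _ hb0 hb1, Int.fract_eq_self.2 ⟨hb0.le, hb1⟩]
    · push_neg at hc
      rw [if_neg (not_le.2 hc)]
      have hb0 : 0 < G s + 1 / N - 1 := by linarith
      have hb1 : G s + 1 / N - 1 < 1 := by
        have : 1 / (N:ℝ) ≤ 1 := by
          rw [div_le_one hN0]; exact_mod_cast hN
        linarith
      rw [hGGinv _ hb0 hb1]
      rw [show G s + 1 / N = (G s + 1 / N - 1) + ((1:ℤ):ℝ) by push_cast; ring,
        Int.fract_add_intCast, Int.fract_eq_self.2 ⟨hb0.le, hb1⟩]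
      push_cast
      ring
  -- everything works pointwise on the good set
  have key : ∀ r : ℝ, (∀ k : ℕ, G r ≠ (k : ℝ) / N) →
      (∀ i : ℕ, 1 ≤ i → i ≤ N - 1 → f i r = (f 1)^[i] r) ∧ (f 1)^[N] r = r := by
    intro r hr
    have hrZ : ∀ m : ℤ, G r ≠ (m : ℝ) / N := hgood_of r hr
    have iter : ∀ j : ℕ, G ((f 1)^[j] r) = Int.fract (G r + (j : ℝ) / N) := by
      intro j
      induction j with
      | zero =>
        simp only [Function.iterate_zero, id_eq, Nat.cast_zero, zero_div, add_zero]
        exact (Int.fract_eq_self.2 ⟨(hG0 r).le, hG1 r⟩).symm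
      | succ j ih =>
        rw [Function.iterate_succ_apply']
        have hsgood : ∀ m : ℤ, G ((f 1)^[j] r) ≠ (m : ℝ) / N := by
          intro m hm
          rw [ih] at hm
          obtain ⟨F, hF⟩ : ∃ F : ℤ, Int.fract (G r + (j:ℝ)/N)
              = G r + (j:ℝ)/N - (F:ℝ) := ⟨_, rfl⟩
          rw [hF] at hm
          apply hrZ (m - j + N * F)
          have hGr : G r = (m:ℝ)/N - (j:ℝ)/N + (F:ℝ) := by linarith
          rw [hGr]
          push_cast
          field_simp
        rw [step _ hsgood, ih]
        have hfr : Int.fract (G r + (j : ℝ) / N)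
            = G r + (j : ℝ) / N - ↑⌊G r + (j : ℝ) / N⌋ := rfl
        rw [show Int.fract (G r + (j : ℝ) / N) + 1 / (N:ℝ)
            = (G r + (j : ℝ) / N + 1 / N) - ↑⌊G r + (j : ℝ) / N⌋ by rw [hfr]; ring,
          Int.fract_sub_intCast]
        congr 1
        push_cast
        rw [add_assoc, ← add_div]
    have hinj := hGmono.injective
    constructor
    · intro i hi1 hi2
      have hiN : (i : ℝ) + 1 ≤ N := by
        have : i + 1 ≤ N := by omega
        exact_mod_cast this
      have hne2 : G r ≠ ((N:ℝ) - i) / N := by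
        intro hc
        exact hrZ ((N : ℤ) - i) (by rw [hc]; push_cast; ring)
      have hNiN : ((N:ℝ) - i) / N + (i:ℝ) / N = 1 := by field_simp; ring
      apply hinj
      rw [iter i, hfdef]
      by_cases hc : G r ≤ ((N : ℝ) - i) / N
      · have hlt : G r < ((N:ℝ) - i) / N := lt_of_le_of_ne hc hne2
        rw [if_pos hc]
        have hb0 : 0 < G r + (i:ℝ) / N := by
          have := hG0 r
          have : (0:ℝ) ≤ (i:ℝ) / N := by positivity
          linarith [hG0 r]
        have hb1 : G r + (i:ℝ) / N < 1 := by linarith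
        rw [hGGinv _ hb0 hb1, Int.fract_eq_self.2 ⟨hb0.le, hb1⟩]
      · push_neg at hc
        rw [if_neg (not_le.2 hc)]
        have hb0 : 0 < G r + (i:ℝ) / N - 1 := by linarith
        have hb1 : G r + (i:ℝ) / N - 1 < 1 := by
          have h1 := hG1 r
          have : (i:ℝ) / N ≤ 1 := by
            rw [div_le_one hN0]; linarith
          linarith
        rw [hGGinv _ hb0 hb1]
        rw [show G r + (i:ℝ) / N = (G r + (i:ℝ) / N - 1) + ((1:ℤ):ℝ) by push_cast; ring,
          Int.fract_add_intCast, Int.fract_eq_self.2 ⟨hb0.le, hb1⟩]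
        push_cast
        ring
    · apply hinj
      rw [iter N]
      rw [show G r + (N : ℝ) / N = G r + ((1:ℤ):ℝ) by
          rw [div_self hN0.ne']; norm_num,
        Int.fract_add_intCast, Int.fract_eq_self.2 ⟨(hG0 r).le, hG1 r⟩]
  -- the bad set is countable, hence null
  have hae : ∀ᵐ r ∂μ, ∀ k : ℕ, G r ≠ (k : ℝ) / N := by
    rw [MeasureTheory.ae_iff]
    have hsub : {r : ℝ | ¬ ∀ k : ℕ, G r ≠ (k : ℝ) / N}
        ⊆ ⋃ k : ℕ, {r : ℝ | G r = (k : ℝ) / N} := by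
      intro r hr
      simp only [Set.mem_setOf_eq, not_forall, not_not] at hr
      obtain ⟨k, hk⟩ := hr
      exact Set.mem_iUnion.2 ⟨k, hk⟩
    have hcnt : (⋃ k : ℕ, {r : ℝ | G r = (k : ℝ) / N}).Countable :=
      Set.countable_iUnion fun k =>
        Set.Subsingleton.countable fun a ha b hb =>
          hGmono.injective (ha.trans hb.symm)
    have hvol : volume (⋃ k : ℕ, {r : ℝ | G r = (k : ℝ) / N}) = 0 :=
      hcnt.measure_zero _
    exact measure_mono_null hsub
      (withDensity_absolutelyContinuous volume _ hvol)
  constructor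
  · intro i hi1 hi2
    filter_upwards [hae] with r hr
    exact (key r hr).1 i hi1 hi2
  · filter_upwards [hae] with r hr
    exact (key r hr).2
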